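/- Let A, B be real symmetric M×M matrices with A positive semidefinite and invertible (hence positive definite), and let P⋆ be a global minimizer of J over Gr(m,ℝ^M). Let λ₁ ≤ ⋯ ≤ λ_M be the eigenvalues of G(P⋆) counted with multiplicity. Then λ_m < λ_{m+1}, and P⋆ = 1_{(−∞,λ_m]}(G(P⋆)), i.e. P⋆ is the orthogonal projector onto the sum of eigenspaces of G(P⋆) associated with eigenvalues ≤ λ_m. -/

import Mathlib

open Matrix Filter Topology

noncomputable section

/-- The Grassmann manifold `Gr(m, ℝ^M)`. -/
def Gr (M m : ℕ) (P : Matrix (Fin M) (Fin M) ℝ) : Prop :=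
  P.IsSymm ∧ P * P = P ∧ P.trace = (m : ℝ)

/-- The cost function `J(P) = Tr(BP) - (1/2) Tr(APAP)`. -/
def Jfun {M : ℕ} (A B P : Matrix (Fin M) (Fin M) ℝ) : ℝ :=
  (B * P).trace - (1 / 2) * (A * P * A * P).trace

/-- The gradient `G(P) = B - APA`. -/
def Gmap {M : ℕ} (A B P : Matrix (Fin M) (Fin M) ℝ) : Matrix (Fin M) (Fin M) ℝ :=
  B - A * P * A

/-- `μ` is the non-decreasing enumeration of the eigenvalues of `S`, with multiplicity. -/
def sortedEigs {M : ℕ} (S : Matrix (Fin M) (Fin M) ℝ) (μ : Fin M → ℝ) : Prop :=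
  Monotone μ ∧ ∃ U : Matrix (Fin M) (Fin M) ℝ, U * Uᵀ = 1 ∧ S = U * Matrix.diagonal μ * Uᵀ

/-- `P = 1_{(-∞,t]}(S)`: the orthogonal projector onto the sum of the eigenspaces of the
symmetric matrix `S` associated with eigenvalues `≤ t`. -/
def IsSpectralProjLE {M : ℕ} (S : Matrix (Fin M) (Fin M) ℝ) (t : ℝ)
    (P : Matrix (Fin M) (Fin M) ℝ) : Prop :=
  P.IsSymm ∧ P * P = P ∧ S * P = P * S ∧
  (∀ v : Fin M → ℝ, P.mulVec v = v → S.mulVec v ⬝ᵥ v ≤ t * (v ⬝ᵥ v)) ∧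
  (∀ v : Fin M → ℝ, v ≠ 0 → P.mulVec v = 0 → t * (v ⬝ᵥ v) < S.mulVec v ⬝ᵥ v)

section Aux

variable {M m : ℕ}

lemma Jdiff (A B P Q : Matrix (Fin M) (Fin M) ℝ) :
    Jfun A B Q - Jfun A B P =
      ((Gmap A B P) * (Q - P)).trace - (1/2) * ((A*(Q-P)*(A*(Q-P))).trace) := by
  simp only [Jfun, Gmap, Matrix.sub_mul, Matrix.mul_sub, Matrix.trace_sub, Matrix.mul_assoc]
  have h := Matrix.trace_mul_comm (A*Q) (A*P)
  simp only [Matrix.mul_assoc] at h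
  linarith [h]

lemma trace_sq_pos (S : Matrix (Fin M) (Fin M) ℝ) (hS : Sᵀ = S) (hne : S ≠ 0) :
    0 < (S * S).trace := by
  have key : (S * S).trace = ∑ i, ∑ j, S i j * S i j := by
    simp only [Matrix.trace, Matrix.diag, Matrix.mul_apply]
    refine Finset.sum_congr rfl fun i _ => Finset.sum_congr rfl fun j _ => ?_
    have := congrFun (congrFun hS i) j
    rw [Matrix.transpose_apply] at this
    rw [this]
  rw [key]
  have hnn : ∀ i ∈ Finset.univ, (0:ℝ) ≤ ∑ j, S i j * S i j :=
    fun i _ => Finset.sum_nonneg fun j _ => mul_self_nonneg _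
  rcases lt_or_eq_of_le (Finset.sum_nonneg hnn) with h | h
  · exact h
  · exfalso; apply hne
    have h0 : ∀ i ∈ Finset.univ, (∑ j, S i j * S i j) = 0 :=
      (Finset.sum_eq_zero_iff_of_nonneg hnn).1 h.symm
    ext i j
    have h1 : ∀ j ∈ Finset.univ, S i j * S i j = 0 :=
      (Finset.sum_eq_zero_iff_of_nonneg (fun j _ => mul_self_nonneg _)).1 (h0 i (Finset.mem_univ i))
    have := h1 j (Finset.mem_univ j)
    simpa [mul_self_eq_zero] using this

open scoped MatrixOrder in
lemma sqrt_exists (A : Matrix (Fin M) (Fin M) ℝ) (hApsd : A.PosSemidef) (hAinv : IsUnit A) :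
    ∃ C : Matrix (Fin M) (Fin M) ℝ, Cᵀ = C ∧ C * C = A ∧ IsUnit C := by
  refine ⟨CFC.sqrt A, ?_, CFC.sqrt_mul_sqrt_self A hApsd.nonneg, ?_⟩
  · have h := (CFC.sqrt_nonneg A).posSemidef.1
    simpa [Matrix.IsHermitian, Matrix.conjTranspose_eq_transpose_of_trivial] using h
  · rw [Matrix.isUnit_iff_isUnit_det] at hAinv ⊢
    have : (CFC.sqrt A).det * (CFC.sqrt A).det = A.det := by
      rw [← Matrix.det_mul, CFC.sqrt_mul_sqrt_self A hApsd.nonneg]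
    rw [← this] at hAinv
    exact isUnit_of_mul_isUnit_left hAinv

lemma conj_cancel (U : Matrix (Fin M) (Fin M) ℝ) (hU : Uᵀ * U = 1)
    (X : Matrix (Fin M) (Fin M) ℝ) : Uᵀ * (U * X * Uᵀ) * U = X := by
  simp only [Matrix.mul_assoc, hU, Matrix.mul_one]
  rw [← Matrix.mul_assoc, hU, Matrix.one_mul]

lemma conj_diag_mul (U : Matrix (Fin M) (Fin M) ℝ) (hU2 : Uᵀ * U = 1) (x y : Fin M → ℝ) :
    (U * Matrix.diagonal x * Uᵀ) * (U * Matrix.diagonal y * Uᵀ)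
      = U * Matrix.diagonal (fun i => x i * y i) * Uᵀ := by
  simp only [Matrix.mul_assoc]
  rw [← Matrix.mul_assoc Uᵀ U, hU2, Matrix.one_mul,
    ← Matrix.mul_assoc (Matrix.diagonal x), Matrix.diagonal_mul_diagonal]

lemma gr_conj_diag (U : Matrix (Fin M) (Fin M) ℝ) (hU2 : Uᵀ * U = 1)
    (c : Fin M → ℝ) (hc : ∀ i, c i * c i = c i) (hsum : ∑ i, c i = (m : ℝ)) :
    Gr M m (U * Matrix.diagonal c * Uᵀ) := by
  refine ⟨?_, ?_, ?_⟩
  · show (U * Matrix.diagonal c * Uᵀ)ᵀ = _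
    simp [Matrix.transpose_mul, Matrix.diagonal_transpose, Matrix.mul_assoc]
  · rw [conj_diag_mul U hU2]
    congr 2
    exact congrArg Matrix.diagonal (funext hc)
  · rw [Matrix.trace_mul_comm, ← Matrix.mul_assoc, hU2, Matrix.one_mul,
      Matrix.trace_diagonal, hsum]

lemma trace_conj_diag_mul (U : Matrix (Fin M) (Fin M) ℝ) (hU2 : Uᵀ * U = 1)
    (lam c : Fin M → ℝ) :
    ((U * Matrix.diagonal lam * Uᵀ) * (U * Matrix.diagonal c * Uᵀ)).trace
      = ∑ i, lam i * c i := by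
  rw [conj_diag_mul U hU2, Matrix.trace_mul_comm, ← Matrix.mul_assoc, hU2, Matrix.one_mul,
    Matrix.trace_diagonal]

lemma sum_indicator (hmM : m ≤ M) :
    (∑ i : Fin M, (if (i : ℕ) < m then (1:ℝ) else 0)) = (m : ℝ) := by
  rw [Fin.sum_univ_eq_sum_range (fun k => if k < m then (1:ℝ) else 0) M]
  rw [← Finset.sum_range_add_sum_Ico _ hmM]
  have h1 : ∑ k ∈ Finset.range m, (if k < m then (1:ℝ) else 0) = (m:ℝ) := by
    rw [Finset.sum_congr rfl (fun k hk => if_pos (Finset.mem_range.1 hk))]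
    simp
  have h2 : ∑ k ∈ Finset.Ico m M, (if k < m then (1:ℝ) else 0) = 0 := by
    refine Finset.sum_eq_zero fun k hk => if_neg ?_
    have := (Finset.mem_Ico.1 hk).1; omega
  rw [h1, h2, add_zero]

end Aux

set_option maxHeartbeats 2000000 in
theorem stmt_3 {M m : ℕ} (hM : 2 ≤ M) (hm1 : 1 ≤ m) (hm2 : m ≤ M - 1)
    (A B : Matrix (Fin M) (Fin M) ℝ) (hA : A.IsSymm) (hApsd : A.PosSemidef)
    (hAinv : IsUnit A) (hB : B.IsSymm)
    (Pstar : Matrix (Fin M) (Fin M) ℝ) (hP : Gr M m Pstar)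
    (hmin : ∀ P : Matrix (Fin M) (Fin M) ℝ, Gr M m P → Jfun A B Pstar ≤ Jfun A B P)
    (lam : Fin M → ℝ) (hlam : sortedEigs (Gmap A B Pstar) lam) :
    lam ⟨m - 1, by omega⟩ < lam ⟨m, by omega⟩ ∧
      IsSpectralProjLE (Gmap A B Pstar) (lam ⟨m - 1, by omega⟩) Pstar := by
  obtain ⟨hPsymm, hPidem, hPtr⟩ := hP
  obtain ⟨hmono, U, hU1, hGU⟩ := hlam
  have hU2 : Uᵀ * U = 1 := mul_eq_one_comm.mp hU1
  have hmM : m ≤ M := by omega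
  set a : Fin M := ⟨m - 1, by omega⟩ with ha
  set b : Fin M := ⟨m, by omega⟩ with hb
  obtain ⟨C, hCsymm, hCC, hCunit⟩ := sqrt_exists A hApsd hAinv
  have hCdet : IsUnit C.det := (Matrix.isUnit_iff_isUnit_det C).mp hCunit
  -- key strict inequality
  have key : ∀ Q, Gr M m Q → Q ≠ Pstar →
      (Gmap A B Pstar * Pstar).trace < (Gmap A B Pstar * Q).trace := by
    intro Q hQ hne
    have h0 : 0 ≤ Jfun A B Q - Jfun A B Pstar := sub_nonneg.2 (hmin Q hQ)
    rw [Jdiff] at h0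
    set H := Q - Pstar with hH
    have Hsymm : Hᵀ = H := by
      rw [hH, Matrix.transpose_sub, hQ.1, hPsymm]
    have hHne : H ≠ 0 := sub_ne_zero.2 hne
    set S := C * H * C with hSdef
    have hSsymm : Sᵀ = S := by
      simp [hSdef, Matrix.transpose_mul, hCsymm, Hsymm, Matrix.mul_assoc]
    have hSne : S ≠ 0 := by
      intro h
      apply hHne
      have e : C⁻¹ * S * C⁻¹ = H := by
        simp only [hSdef, ← Matrix.mul_assoc]
        rw [Matrix.nonsing_inv_mul C hCdet, Matrix.one_mul, Matrix.mul_assoc,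
          Matrix.mul_nonsing_inv C hCdet, Matrix.mul_one]
      rw [← e, h, Matrix.mul_zero, Matrix.zero_mul]
    have htr : (A * H * (A * H)).trace = (S * S).trace := by
      rw [show A * H * (A * H) = C * (C * H * (C * (C * H))) from by
        rw [← hCC]; simp [Matrix.mul_assoc], Matrix.trace_mul_comm]
      congr 1
      simp [hSdef, Matrix.mul_assoc]
    have hpos : 0 < (S * S).trace := trace_sq_pos S hSsymm hSne
    have htrG : (Gmap A B Pstar * H).trace
        = (Gmap A B Pstar * Q).trace - (Gmap A B Pstar * Pstar).trace := by
      rw [hH, Matrix.mul_sub, Matrix.trace_sub]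
    rw [htrG, htr] at h0
    linarith
  -- the diagonal projector and Ky Fan
  set c₀ : Fin M → ℝ := fun i => if (i : ℕ) < m then (1:ℝ) else 0 with hc₀
  have hc₀idem : ∀ i, c₀ i * c₀ i = c₀ i := by
    intro i; by_cases hi : (i:ℕ) < m <;> simp [hc₀, hi]
  have hc₀sum : ∑ i, c₀ i = (m : ℝ) := sum_indicator hmM
  have hc₀a : c₀ a = 1 := by simp [hc₀, ha]; omega
  have hc₀b : c₀ b = 0 := by simp [hc₀, hb]
  set Q₀ := U * Matrix.diagonal c₀ * Uᵀ with hQ₀def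
  have hQ₀gr : Gr M m Q₀ := gr_conj_diag U hU2 c₀ hc₀idem hc₀sum
  have trQ₀ : (Gmap A B Pstar * Q₀).trace = ∑ i, lam i * c₀ i := by
    rw [hGU, hQ₀def]; exact trace_conj_diag_mul U hU2 lam c₀
  -- diagonal entries of R := Uᵀ Pstar U
  set R := Uᵀ * Pstar * U with hRdef
  have hUUc : ∀ X : Matrix (Fin M) (Fin M) ℝ, U * (Uᵀ * X) = X := fun X => by
    rw [← Matrix.mul_assoc, hU1, Matrix.one_mul]
  have hRsymm : Rᵀ = R := by
    simp [hRdef, Matrix.transpose_mul, hPsymm.eq, Matrix.mul_assoc]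
  have hRidem : R * R = R := by
    simp only [hRdef, Matrix.mul_assoc]
    rw [hUUc (Pstar * U), ← Matrix.mul_assoc Pstar Pstar U, hPidem]
  have hRd : ∀ i, R i i = ∑ j, R i j * R i j := by
    intro i
    conv_lhs => rw [← hRidem]
    rw [Matrix.mul_apply]
    refine Finset.sum_congr rfl fun j _ => ?_
    have := congrFun (congrFun hRsymm i) j
    rw [Matrix.transpose_apply] at this
    rw [this]
  have hd0 : ∀ i, 0 ≤ R i i := fun i =>
    (hRd i) ▸ Finset.sum_nonneg fun j _ => mul_self_nonneg _
  have hd1 : ∀ i, R i i ≤ 1 := by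
    intro i
    have hsq : R i i * R i i ≤ ∑ j, R i j * R i j :=
      Finset.single_le_sum (f := fun j => R i j * R i j)
        (fun j _ => mul_self_nonneg _) (Finset.mem_univ i)
    rw [← hRd i] at hsq
    nlinarith [hd0 i]
  have hRtr : ∑ i, R i i = (m : ℝ) := by
    have e : R.trace = (m : ℝ) := by
      rw [hRdef, Matrix.trace_mul_comm, hUUc Pstar, hPtr]
    simpa [Matrix.trace, Matrix.diag] using e
  have hGP : (Gmap A B Pstar * Pstar).trace = ∑ i, lam i * R i i := by
    rw [hGU, show U * Matrix.diagonal lam * Uᵀ * Pstar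
        = U * (Matrix.diagonal lam * (Uᵀ * Pstar)) from by simp [Matrix.mul_assoc],
      Matrix.trace_mul_comm, Matrix.mul_assoc, Matrix.mul_assoc, ← Matrix.mul_assoc Uᵀ Pstar U,
      ← hRdef]
    simp [Matrix.trace, Matrix.diag, Matrix.diagonal_mul]
  -- Ky Fan inequality
  have hla : ∀ i : Fin M, (i:ℕ) < m → lam i ≤ lam a := by
    intro i hi; exact hmono (by rw [Fin.le_def]; simp [ha]; omega)
  have hla' : ∀ i : Fin M, m ≤ (i:ℕ) → lam a ≤ lam i := by
    intro i hi; exact hmono (by rw [Fin.le_def]; simp [ha]; omega)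
  have hlb' : ∀ i : Fin M, m ≤ (i:ℕ) → lam b ≤ lam i := by
    intro i hi; exact hmono (by rw [Fin.le_def]; simp [hb]; omega)
  have kyfan : ∑ i, lam i * c₀ i ≤ (Gmap A B Pstar * Pstar).trace := by
    rw [hGP]
    have step : ∀ i ∈ Finset.univ, lam a * (R i i - c₀ i) ≤ lam i * (R i i - c₀ i) := by
      intro i _
      by_cases hi : (i:ℕ) < m
      · have h1 : lam i ≤ lam a := hla i hi
        have h2 : c₀ i = 1 := by simp [hc₀, hi]
        rw [h2]
        nlinarith [hd1 i]
      · have h1 : lam a ≤ lam i := hla' i (le_of_not_gt hi)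
        have h2 : c₀ i = 0 := by simp [hc₀, hi]
        rw [h2]
        nlinarith [hd0 i]
    have e1 : ∑ i, lam a * (R i i - c₀ i) = 0 := by
      rw [← Finset.mul_sum, Finset.sum_sub_distrib, hRtr, hc₀sum]; ring
    have e2 := Finset.sum_le_sum step
    rw [e1] at e2
    have e3 : ∑ i, lam i * (R i i - c₀ i) = ∑ i, lam i * R i i - ∑ i, lam i * c₀ i := by
      rw [← Finset.sum_sub_distrib]
      exact Finset.sum_congr rfl fun i _ => by ring
    rw [e3] at e2
    linarith
  -- P⋆ equals the diagonal projector
  have hPeq : Pstar = Q₀ := by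
    by_contra hne
    have h := key Q₀ hQ₀gr (fun h => hne h.symm)
    rw [trQ₀] at h
    linarith
  -- Part 1: strict gap
  set c₁ : Fin M → ℝ := fun i => if i = a then 0 else if i = b then 1 else c₀ i with hc₁
  have hab : a ≠ b := by
    simp only [ha, hb, ne_eq, Fin.mk.injEq]; omega
  have hgdiff : ∀ i, c₁ i - c₀ i
      = (if i = a then (-1:ℝ) else 0) + (if i = b then 1 else 0) := by
    intro i
    by_cases h1 : i = a
    · subst h1; simp [hc₁, hab, hc₀a]
    · by_cases h2 : i = b
      · subst h2; simp [hc₁, h1, hc₀b]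
      · simp [hc₁, h1, h2]
  have hc₁idem : ∀ i, c₁ i * c₁ i = c₁ i := by
    intro i
    by_cases h1 : i = a
    · subst h1; simp [hc₁]
    · by_cases h2 : i = b
      · subst h2; simp [hc₁, h1]
      · simp [hc₁, h1, h2, hc₀idem i]
  have hsumdiff : ∑ i, (c₁ i - c₀ i) = 0 := by
    rw [Finset.sum_congr rfl fun i _ => hgdiff i, Finset.sum_add_distrib]
    simp [Finset.sum_ite_eq']
  have hc₁sum : ∑ i, c₁ i = (m : ℝ) := by
    have h := hsumdiff
    rw [Finset.sum_sub_distrib, hc₀sum] at h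
    linarith
  have hlamdiff : ∑ i, lam i * c₁ i - ∑ i, lam i * c₀ i = lam b - lam a := by
    rw [← Finset.sum_sub_distrib]
    have e : ∀ i ∈ Finset.univ, lam i * c₁ i - lam i * c₀ i
        = (if i = a then -lam i else 0) + (if i = b then lam i else 0) := by
      intro i _
      rw [← mul_sub, hgdiff i]
      by_cases h1 : i = a
      · subst h1; rw [if_pos rfl, if_pos rfl, if_neg hab, if_neg hab]; ring
      · by_cases h2 : i = b
        · subst h2; rw [if_neg h1, if_neg h1, if_pos rfl, if_pos rfl]; ring
        · rw [if_neg h1, if_neg h1, if_neg h2, if_neg h2]; ring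
    rw [Finset.sum_congr rfl e, Finset.sum_add_distrib]
    simp [Finset.sum_ite_eq']
    ring
  set Q₁ := U * Matrix.diagonal c₁ * Uᵀ with hQ₁def
  have hQ₁gr : Gr M m Q₁ := gr_conj_diag U hU2 c₁ hc₁idem hc₁sum
  have trQ₁ : (Gmap A B Pstar * Q₁).trace = ∑ i, lam i * c₁ i := by
    rw [hGU, hQ₁def]; exact trace_conj_diag_mul U hU2 lam c₁
  have hQ₁ne : Q₁ ≠ Pstar := by
    rw [hPeq, hQ₁def, hQ₀def]
    intro h
    have h2 := congrArg (fun Z => Uᵀ * Z * U) h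
    simp only [conj_cancel U hU2] at h2
    have h3 := congrFun (Matrix.diagonal_injective h2) a
    rw [hc₀a] at h3
    simp [hc₁] at h3
  have hgap : lam a < lam b := by
    have h := key Q₁ hQ₁gr hQ₁ne
    rw [trQ₁] at h
    nth_rewrite 2 [hPeq] at h
    rw [show (Gmap A B Pstar * Q₀).trace = ∑ i, lam i * c₀ i from trQ₀] at h
    linarith
  have hUv1 : ∀ x, U *ᵥ (Uᵀ *ᵥ x) = x := fun x => by
    rw [Matrix.mulVec_mulVec, hU1, Matrix.one_mulVec]
  have hUv2 : ∀ x, Uᵀ *ᵥ (U *ᵥ x) = x := fun x => by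
    rw [Matrix.mulVec_mulVec, hU2, Matrix.one_mulVec]
  have hdot : ∀ x y, (U *ᵥ x) ⬝ᵥ (U *ᵥ y) = x ⬝ᵥ y := fun x y => by
    rw [Matrix.dotProduct_mulVec, ← Matrix.mulVec_transpose, hUv2]
  have hPv : ∀ v, Pstar *ᵥ v = U *ᵥ (Matrix.diagonal c₀ *ᵥ (Uᵀ *ᵥ v)) := fun v => by
    rw [hPeq, hQ₀def, ← Matrix.mulVec_mulVec, ← Matrix.mulVec_mulVec]
  have hGv : ∀ v, Gmap A B Pstar *ᵥ v = U *ᵥ (Matrix.diagonal lam *ᵥ (Uᵀ *ᵥ v)) := fun v => by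
    rw [hGU, ← Matrix.mulVec_mulVec, ← Matrix.mulVec_mulVec]
  refine ⟨hgap, hPsymm, hPidem, ?_, ?_, ?_⟩
  · -- commutation
    rw [hGU, hPeq, hQ₀def, conj_diag_mul U hU2, conj_diag_mul U hU2]
    congr 2
    exact congrArg Matrix.diagonal (funext fun i => mul_comm _ _)
  · -- eigenvalue bound on the range
    intro v hv
    set w := Uᵀ *ᵥ v with hw
    have hvw : v = U *ᵥ w := (hUv1 v).symm
    have h1 : U *ᵥ (Matrix.diagonal c₀ *ᵥ w) = U *ᵥ w := by
      rw [hw, ← hPv v, hv, hUv1 v]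
    have hdw : Matrix.diagonal c₀ *ᵥ w = w := by
      have h2 := congrArg (fun x => Uᵀ *ᵥ x) h1
      simpa only [hUv2] using h2
    have hwi : ∀ i : Fin M, ¬ ((i:ℕ) < m) → w i = 0 := by
      intro i hi
      have h2 := congrFun hdw i
      rw [Matrix.mulVec_diagonal] at h2
      simp only [hc₀, if_neg hi, zero_mul] at h2
      exact h2.symm
    show Gmap A B Pstar *ᵥ v ⬝ᵥ v ≤ lam a * (v ⬝ᵥ v)
    rw [hGv v, ← hw, hvw, hdot, hdot]
    simp only [dotProduct, Matrix.mulVec_diagonal]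
    rw [Finset.mul_sum]
    refine Finset.sum_le_sum fun i _ => ?_
    by_cases hi : (i:ℕ) < m
    · have := hla i hi
      nlinarith [mul_self_nonneg (w i)]
    · rw [hwi i hi]; simp
  · -- strict eigenvalue bound on the kernel
    intro v hv0 hv
    set w := Uᵀ *ᵥ v with hw
    have hvw : v = U *ᵥ w := (hUv1 v).symm
    have hdw : Matrix.diagonal c₀ *ᵥ w = 0 := by
      have h1 : U *ᵥ (Matrix.diagonal c₀ *ᵥ w) = 0 := by rw [hw, ← hPv v]; exact hv
      have h2 := congrArg (fun x => Uᵀ *ᵥ x) h1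
      simpa only [hUv2, Matrix.mulVec_zero] using h2
    have hwi : ∀ i : Fin M, (i:ℕ) < m → w i = 0 := by
      intro i hi
      have h2 := congrFun hdw i
      rw [Matrix.mulVec_diagonal] at h2
      simpa [hc₀, if_pos hi] using h2
    have hwne : w ≠ 0 := fun h => hv0 (by rw [hvw, h, Matrix.mulVec_zero])
    obtain ⟨i₀, hi₀⟩ := Function.ne_iff.1 hwne
    have hsumpos : 0 < ∑ i, w i * w i := by
      have h1 : 0 < w i₀ * w i₀ := mul_self_pos.2 (by simpa using hi₀)
      have h2 : w i₀ * w i₀ ≤ ∑ i, w i * w i :=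
        Finset.single_le_sum (f := fun i => w i * w i)
          (fun j _ => mul_self_nonneg _) (Finset.mem_univ i₀)
      linarith
    show lam a * (v ⬝ᵥ v) < Gmap A B Pstar *ᵥ v ⬝ᵥ v
    rw [hGv v, ← hw, hvw, hdot, hdot]
    simp only [dotProduct, Matrix.mulVec_diagonal]
    have step : ∑ i, lam b * (w i * w i) ≤ ∑ i, lam i * w i * w i := by
      refine Finset.sum_le_sum fun i _ => ?_
      by_cases hi : (i:ℕ) < m
      · rw [hwi i hi]; simp
      · have := hlb' i (le_of_not_gt hi)
        nlinarith [mul_self_nonneg (w i)]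
    have h3 : lam a * ∑ i, w i * w i < lam b * ∑ i, w i * w i :=
      mul_lt_mul_of_pos_right hgap hsumpos
    rw [Finset.mul_sum]
    rw [Finset.mul_sum, Finset.mul_sum] at h3
    linarith
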